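/- Let p be an odd prime, f an odd positive integer, n a positive integer, and a an integer with a ≡ 1 (mod 4). Let ℓ be an odd prime dividing nf. If ℓ ∤ 4p + af², then C_p^{(ℓ)}(a,f,n) = 1 + ((4p+af²)/ℓ) when ℓ ∤ (p−1)² − af², and C_p^{(ℓ)}(a,f,n) = 1 when ℓ | (p−1)² − af², where (·/ℓ) denotes the Legendre symbol. -/

import Mathlib

lemma int_coprime_of_prime_not_dvd {ℓ : ℕ} (hℓ : ℓ.Prime) {s : ℤ} (h : ¬ (ℓ:ℤ) ∣ s) :
    IsCoprime (ℓ:ℤ) s :=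
  (Nat.prime_iff_prime_int.mp hℓ).coprime_iff_not_dvd.mpr h

lemma hensel_sq {ℓ : ℕ} (hℓ : ℓ.Prime) (hℓ2 : ℓ ≠ 2) {A : ℤ} (hA : ¬ (ℓ:ℤ) ∣ A) :
    ∀ e : ℕ, 1 ≤ e → ∀ y : ℤ, (ℓ:ℤ) ∣ y^2 - A → ∃ x : ℤ, (ℓ:ℤ)^e ∣ x^2 - A ∧ (ℓ:ℤ) ∣ x - y := by
  intro e
  induction e with
  | zero => omega
  | succ e ih =>
    intro _ y hy
    rcases Nat.eq_zero_or_pos e with h1 | h1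
    · subst h1; exact ⟨y, by simpa using hy, by simp⟩
    · obtain ⟨x, hx, hxy⟩ := ih h1 y hy
      obtain ⟨k, hk⟩ := hx
      have hℓx : ¬ (ℓ:ℤ) ∣ x := by
        intro hd
        apply hA
        have h2 : (ℓ:ℤ) ∣ x^2 - A := dvd_trans (dvd_pow_self _ (by omega : e ≠ 0)) ⟨k, hk⟩
        have h3 : (ℓ:ℤ) ∣ x^2 := by rw [sq]; exact hd.mul_right x
        simpa using h3.sub h2
      have hℓ2x : ¬ (ℓ:ℤ) ∣ 2 * x := by
        intro hd
        rcases (Nat.prime_iff_prime_int.mp hℓ).dvd_mul.mp hd with h | h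
        · have h2 : ℓ ∣ 2 := by exact_mod_cast h
          have := Nat.le_of_dvd (by norm_num) h2
          have := hℓ.two_le
          omega
        · exact hℓx h
      obtain ⟨u, v, huv⟩ := int_coprime_of_prime_not_dvd hℓ hℓ2x
      -- u * ℓ + v * (2x) = 1
      refine ⟨x + (ℓ:ℤ)^e * (-(k * v)), ?_, ?_⟩
      · have key : (x + (ℓ:ℤ)^e * (-(k * v)))^2 - A
            = (ℓ:ℤ)^e * (k * (u * ℓ)) + ((ℓ:ℤ)^e)^2 * (k*v)^2 := by
          linear_combination hk - (ℓ:ℤ)^e * k * huv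
        rw [key]
        apply dvd_add
        · exact ⟨k * u, by ring⟩
        · exact dvd_mul_of_dvd_left (by rw [← pow_mul]; exact pow_dvd_pow _ (by omega)) _
      · have : (ℓ:ℤ) ∣ (ℓ:ℤ)^e * (-(k * v)) :=
          dvd_mul_of_dvd_left (dvd_pow_self _ (by omega)) _
        have := hxy.add this
        simpa [add_sub_right_comm] using this

lemma dvd_sub_emod (n m : ℤ) : n ∣ m - m % n := ⟨m / n, by rw [Int.emod_def]; ring⟩

lemma quad_cong (N u v b A : ℤ) (h : N ∣ u - v) :
    N ∣ ((u - b)^2 - A) - ((v - b)^2 - A) :=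
  (by ring : ((u - b)^2 - A) - ((v - b)^2 - A) = (u - v) * (u + v - 2*b)) ▸ h.mul_right _

lemma card_quad {ℓ : ℕ} (hℓ : ℓ.Prime) (hℓ2 : ℓ ≠ 2) {A : ℤ} (hA : ¬(ℓ:ℤ) ∣ A) (b : ℤ)
    (q : ℕ → Prop) [DecidablePred q] {e : ℕ} (he : 1 ≤ e) :
    ((Finset.range (ℓ^e)).filter
        (fun m : ℕ => ((ℓ:ℤ)^e ∣ (((m:ℤ) - b)^2 - A)) ∧ q (m % ℓ))).card
    = ((Finset.range ℓ).filter
        (fun m : ℕ => ((ℓ:ℤ) ∣ (((m:ℤ) - b)^2 - A)) ∧ q m)).card := by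
  have hℓ0 : 0 < ℓ := hℓ.pos
  have hℓe0 : 0 < ℓ ^ e := Nat.pow_pos hℓ0  -- may need rename
  have hnot2 : ¬ (ℓ:ℤ) ∣ 2 := by
    intro h
    have h2 : ℓ ∣ 2 := by exact_mod_cast h
    have := Nat.le_of_dvd (by norm_num) h2
    have := hℓ.two_le
    omega
  -- for any solution m, ℓ does not divide m - b
  have hroot : ∀ m : ℤ, ((ℓ:ℤ) ∣ ((m - b)^2 - A)) → ¬ (ℓ:ℤ) ∣ (m - b) := by
    intro m hm hd
    apply hA
    have : (ℓ:ℤ) ∣ (m - b)^2 := by rw [sq]; exact hd.mul_right _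
    simpa using this.sub hm
  apply Finset.card_bij (fun m _ => m % ℓ)
  · intro m hm
    rw [Finset.mem_filter, Finset.mem_range] at hm ⊢
    obtain ⟨hlt, hdvd, hq⟩ := hm
    have hd1 : (ℓ:ℤ) ∣ (((m:ℤ) - b)^2 - A) :=
      dvd_trans (dvd_pow_self _ (by omega : e ≠ 0)) hdvd
    have hmm : (ℓ:ℤ) ∣ ((m:ℤ) - ((m % ℓ : ℕ):ℤ)) := by
      push_cast [Int.natCast_mod]
      exact dvd_sub_emod _ _
    refine ⟨Nat.mod_lt _ hℓ0, ?_, hq⟩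
    have := hd1.sub (quad_cong (ℓ:ℤ) (m:ℤ) ((m % ℓ : ℕ):ℤ) b A hmm)
    simpa using this
  · intro m₁ hm₁ m₂ hm₂ hmod
    rw [Finset.mem_filter, Finset.mem_range] at hm₁ hm₂
    obtain ⟨hlt₁, hdvd₁, _⟩ := hm₁
    obtain ⟨hlt₂, hdvd₂, _⟩ := hm₂
    have hcong : (ℓ:ℤ) ∣ ((m₁:ℤ) - (m₂:ℤ)) :=
      (Nat.ModEq.symm (hmod : Nat.ModEq ℓ m₁ m₂)).dvd
    have hdiff : (ℓ:ℤ)^e ∣ ((m₁:ℤ) - (m₂:ℤ)) * ((m₁:ℤ) + (m₂:ℤ) - 2*b) := by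
      have := hdvd₁.sub hdvd₂
      have heq : (((m₁:ℤ) - b)^2 - A) - (((m₂:ℤ) - b)^2 - A)
          = ((m₁:ℤ) - (m₂:ℤ)) * ((m₁:ℤ) + (m₂:ℤ) - 2*b) := by ring
      rwa [heq] at this
    have hnd : ¬ (ℓ:ℤ) ∣ ((m₁:ℤ) + (m₂:ℤ) - 2*b) := by
      intro hd
      have h2 : (ℓ:ℤ) ∣ 2 * ((m₂:ℤ) - b) := by
        have h3 := hd.sub hcong
        have heq : ((m₁:ℤ) + (m₂:ℤ) - 2*b) - ((m₁:ℤ) - (m₂:ℤ)) = 2 * ((m₂:ℤ) - b) := by ring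
        rwa [heq] at h3
      rcases (Nat.prime_iff_prime_int.mp hℓ).dvd_mul.mp h2 with h | h
      · exact hnot2 h
      · exact hroot (m₂:ℤ) (dvd_trans (dvd_pow_self _ (by omega : e ≠ 0)) hdvd₂) h
    have hcop : IsCoprime ((ℓ:ℤ)^e) ((m₁:ℤ) + (m₂:ℤ) - 2*b) :=
      (int_coprime_of_prime_not_dvd hℓ hnd).pow_left
    have hdvd : (ℓ:ℤ)^e ∣ ((m₁:ℤ) - (m₂:ℤ)) := hcop.dvd_of_dvd_mul_right hdiff
    have habs : |(m₁:ℤ) - (m₂:ℤ)| < (ℓ:ℤ)^e := by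
      have hc : ((ℓ^e : ℕ):ℤ) = (ℓ:ℤ)^e := by push_cast; ring
      rw [← hc, abs_sub_lt_iff]
      constructor <;> omega
    have := Int.eq_zero_of_abs_lt_dvd hdvd habs
    omega
  · intro m' hm'
    rw [Finset.mem_filter, Finset.mem_range] at hm'
    obtain ⟨hlt', hdvd', hq'⟩ := hm'
    obtain ⟨x₀, hx₀, hx₀y⟩ := hensel_sq hℓ hℓ2 hA e he ((m':ℤ) - b)
      (by have heq : ((m':ℤ) - b)^2 - A = (((m':ℤ)) - b)^2 - A := rfl; exact hdvd')
    set X : ℤ := x₀ + b with hX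
    have hXd : (ℓ:ℤ)^e ∣ (X - b)^2 - A := by
      simpa [hX] using hx₀
    have hXm : (ℓ:ℤ) ∣ X - (m':ℤ) := by
      have : X - (m':ℤ) = x₀ - ((m':ℤ) - b) := by ring
      rw [this]; exact hx₀y
    set L : ℤ := (ℓ:ℤ)^e with hL
    have hL0 : 0 < L := by positivity
    set m : ℕ := (X % L).toNat with hm
    have hmz : (m:ℤ) = X % L := Int.toNat_of_nonneg (Int.emod_nonneg _ (ne_of_gt hL0))
    have hmlt : m < ℓ ^ e := by
      have : (m:ℤ) < L := hmz ▸ Int.emod_lt_of_pos _ hL0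
      rw [hL] at this
      exact_mod_cast this
    have hmX : L ∣ (m:ℤ) - X := by
      rw [hmz]
      have := dvd_sub_emod L X
      have heq : X % L - X = -(X - X % L) := by ring
      rw [heq]
      exact (dvd_neg).mpr this
    have hmdvd : (ℓ:ℤ)^e ∣ (((m:ℤ)) - b)^2 - A := by
      have := hXd.add (quad_cong L (m:ℤ) X b A hmX)
      simpa [hL] using this
    have hmmod : m % ℓ = m' := by
      have hd : (ℓ:ℤ) ∣ ((m:ℤ) - (m':ℤ)) := by
        have h1 : (ℓ:ℤ) ∣ (m:ℤ) - X := dvd_trans (dvd_pow_self _ (by omega : e ≠ 0)) hmX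
        have := h1.add hXm
        simpa using this
      have : m' ≡ m [MOD ℓ] := (Nat.modEq_iff_dvd).mpr (by exact_mod_cast hd)
      calc m % ℓ = m' % ℓ := (Nat.ModEq.symm this).symm ▸ rfl
        _ = m' := Nat.mod_eq_of_lt hlt'
    exact ⟨m, Finset.mem_filter.mpr ⟨Finset.mem_range.mpr hmlt, hmdvd, hmmod ▸ hq'⟩, hmmod⟩

lemma base_count {ℓ : ℕ} [NeZero ℓ] (hℓ : ℓ.Prime) (A b : ℤ) :
    ((Finset.range ℓ).filter
        (fun m : ℕ => ((ℓ:ℤ) ∣ (((m:ℤ) - b)^2 - A)) ∧ m ≠ 0)).card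
    = (Finset.univ.filter
        (fun x : ZMod ℓ => (x - (b : ZMod ℓ))^2 = (A : ZMod ℓ) ∧ x ≠ 0)).card := by
  haveI : Fact ℓ.Prime := ⟨hℓ⟩
  classical
  refine Finset.card_bij (fun m _ => (m : ZMod ℓ)) ?_ ?_ ?_
  · intro m hm
    rw [Finset.mem_filter, Finset.mem_range] at hm
    obtain ⟨hlt, hdvd, hne⟩ := hm
    rw [Finset.mem_filter]
    refine ⟨Finset.mem_univ _, ?_, ?_⟩
    · have := (ZMod.intCast_zmod_eq_zero_iff_dvd (((m:ℤ) - b)^2 - A) ℓ).mpr hdvd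
      push_cast at this
      linear_combination this
    · intro h0
      have : ℓ ∣ m := (ZMod.natCast_eq_zero_iff m ℓ).mp h0
      exact hne (Nat.eq_zero_of_dvd_of_lt this hlt) |>.elim
      
  · intro m₁ hm₁ m₂ hm₂ h
    rw [Finset.mem_filter, Finset.mem_range] at hm₁ hm₂
    have := congrArg ZMod.val h
    rwa [ZMod.val_cast_of_lt hm₁.1, ZMod.val_cast_of_lt hm₂.1] at this
  · intro x hx
    rw [Finset.mem_filter] at hx
    obtain ⟨-, hsq, hne⟩ := hx
    refine ⟨x.val, ?_, ZMod.natCast_rightInverse x⟩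
    rw [Finset.mem_filter, Finset.mem_range]
    refine ⟨ZMod.val_lt x, ?_, ?_⟩
    · rw [← ZMod.intCast_zmod_eq_zero_iff_dvd]
      push_cast
      rw [ZMod.natCast_rightInverse x]
      linear_combination hsq
    · intro h0
      apply hne
      have := ZMod.natCast_rightInverse x
      rw [h0] at this
      simpa using this.symm

open Finset in
lemma shift_count {ℓ : ℕ} [NeZero ℓ] (c A : ZMod ℓ) [DecidableEq (ZMod ℓ)] :
    ((Finset.univ.filter fun x : ZMod ℓ => (x - c)^2 = A)).card
      = ((Finset.univ.filter fun y : ZMod ℓ => y^2 = A)).card := by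
  refine Finset.card_bij (fun x _ => x - c) ?_ ?_ ?_
  · intro x hx
    rw [Finset.mem_filter] at hx ⊢
    exact ⟨Finset.mem_univ _, hx.2⟩
  · intro x₁ h₁ x₂ h₂ h
    have := congrArg (· + c) h
    simpa using this
  · intro y hy
    rw [Finset.mem_filter] at hy
    refine ⟨y + c, Finset.mem_filter.mpr ⟨Finset.mem_univ _, by simpa using hy.2⟩, by ring⟩




open scoped Classical

noncomputable section

/-- `D(m,n) := (m+1-n)^2 - 4m`. -/
def Dfun (m n : ℤ) : ℤ := (m + 1 - n) ^ 2 - 4 * m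

/-- `C_p^{(ℓ)}(a,f,n)`: the number of units `m` modulo `ℓ^e`, where `e = ν_ℓ(4nf²)`,
satisfying `D(p,m) ≡ a f² (mod ℓ^e)`. -/
def Cpl (p : ℕ) (a : ℤ) (f n ℓ : ℕ) : ℕ :=
  ((Finset.range (ℓ ^ ((4 * n * f ^ 2).factorization ℓ))).filter
    (fun m => Nat.Coprime m (ℓ ^ ((4 * n * f ^ 2).factorization ℓ)) ∧
      ((ℓ : ℤ) ^ ((4 * n * f ^ 2).factorization ℓ)) ∣
        (Dfun (p : ℤ) (m : ℤ) - a * (f : ℤ) ^ 2))).card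

/-- Lemma 4.2 (David–Smith), first case: `ℓ` an odd prime dividing `nf` with
`ℓ ∤ 4p + af²`. -/
theorem Cpl_of_not_dvd (p : ℕ) (hp : p.Prime) (hp2 : p ≠ 2)
    (f : ℕ) (hf : Odd f) (hf0 : 0 < f) (n : ℕ) (hn : 0 < n)
    (a : ℤ) (ha : a % 4 = 1)
    (ℓ : ℕ) (hℓ : ℓ.Prime) (hℓ2 : ℓ ≠ 2) (hdvd : ℓ ∣ n * f)
    (hnd : ¬ ((ℓ : ℤ) ∣ (4 * (p : ℤ) + a * (f : ℤ) ^ 2))) :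
    (¬ ((ℓ : ℤ) ∣ (((p : ℤ) - 1) ^ 2 - a * (f : ℤ) ^ 2)) →
      (Cpl p a f n ℓ : ℤ) = 1 + jacobiSym (4 * (p : ℤ) + a * (f : ℤ) ^ 2) ℓ) ∧
    (((ℓ : ℤ) ∣ (((p : ℤ) - 1) ^ 2 - a * (f : ℤ) ^ 2)) → Cpl p a f n ℓ = 1) := by
  haveI : Fact ℓ.Prime := ⟨hℓ⟩
  haveI : NeZero ℓ := ⟨hℓ.ne_zero⟩
  set e := (4 * n * f ^ 2).factorization ℓ with hedef
  have hdvd4 : ℓ ∣ 4 * n * f ^ 2 := hdvd.trans ⟨4 * f, by ring⟩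
  have hne4 : 4 * n * f ^ 2 ≠ 0 := by positivity
  have he : 1 ≤ e := hℓ.factorization_pos_of_dvd hne4 hdvd4
  set A : ℤ := 4 * (p:ℤ) + a * (f:ℤ)^2 with hAdef
  set b : ℤ := (p:ℤ) + 1 with hbdef
  have hAnd : ¬ ((ℓ:ℤ) ∣ A) := hnd
  -- rewrite Cpl as the filtered count appearing in card_quad
  have hD : ∀ m : ℕ, Dfun (p:ℤ) (m:ℤ) - a * (f:ℤ)^2 = ((m:ℤ) - b)^2 - A := by
    intro m
    simp only [Dfun, hAdef, hbdef]
    ring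
  have hcop : ∀ m : ℕ, Nat.Coprime m (ℓ ^ e) ↔ m % ℓ ≠ 0 := by
    intro m
    rw [Nat.coprime_pow_right_iff he]
    rw [Nat.coprime_comm, hℓ.coprime_iff_not_dvd]
    constructor
    · intro h h0; exact h (Nat.dvd_of_mod_eq_zero h0)
    · intro h h0; exact h (Nat.mod_eq_zero_of_dvd h0)
  have hCpl : Cpl p a f n ℓ =
      ((Finset.range (ℓ^e)).filter
        (fun m : ℕ => ((ℓ:ℤ)^e ∣ (((m:ℤ) - b)^2 - A)) ∧ (fun r : ℕ => r ≠ 0) (m % ℓ))).card := by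
    unfold Cpl
    congr 1
    apply Finset.filter_congr
    intro m _
    rw [hD m, hcop m]
    tauto
  have hzm : Cpl p a f n ℓ =
      (Finset.univ.filter
        (fun x : ZMod ℓ => (x - (b : ZMod ℓ))^2 = (A : ZMod ℓ) ∧ x ≠ 0)).card := by
    rw [hCpl, card_quad hℓ hℓ2 hAnd b (fun r : ℕ => r ≠ 0) he, base_count hℓ A b]
  have hA0 : (A : ZMod ℓ) ≠ 0 := fun h => hAnd ((ZMod.intCast_zmod_eq_zero_iff_dvd _ _).mp h)
  have h20 : (2 : ZMod ℓ) ≠ 0 := by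
    intro h
    have h2 : ℓ ∣ 2 := by
      have := (ZMod.natCast_eq_zero_iff 2 ℓ).mp (by exact_mod_cast h)
      exact this
    have := Nat.le_of_dvd (by norm_num) h2
    have := hℓ.two_le
    omega
  have hkey : ((p:ℤ) - 1)^2 - a * (f:ℤ)^2 = b^2 - A := by rw [hAdef, hbdef]; ring
  constructor
  · intro hc
    have hne0 : ∀ x : ZMod ℓ, (x - (b:ZMod ℓ))^2 = (A : ZMod ℓ) → x ≠ 0 := by
      intro x hsq h0
      apply hc
      rw [hkey, ← ZMod.intCast_zmod_eq_zero_iff_dvd]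
      push_cast
      rw [h0] at hsq
      linear_combination hsq
    have hfe : (Finset.univ.filter
          (fun x : ZMod ℓ => (x - (b : ZMod ℓ))^2 = (A : ZMod ℓ) ∧ x ≠ 0))
        = (Finset.univ.filter (fun x : ZMod ℓ => (x - (b : ZMod ℓ))^2 = (A : ZMod ℓ))) := by
      apply Finset.filter_congr
      intro x _
      exact and_iff_left_of_imp (hne0 x)
    have hsq := legendreSym.card_sqrts (p := ℓ) hℓ2 A
    rw [Set.toFinset_setOf] at hsq
    rw [hzm, hfe, shift_count (b : ZMod ℓ) (A : ZMod ℓ)]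
    rw [hsq]
    rw [jacobiSym.legendreSym.to_jacobiSym]
    ring
  · intro hc
    have hAb : ((b : ZMod ℓ))^2 = (A : ZMod ℓ) := by
      have h0 : (((((p:ℤ) - 1)^2 - a * (f:ℤ)^2) : ℤ) : ZMod ℓ) = 0 :=
        (ZMod.intCast_zmod_eq_zero_iff_dvd _ _).mpr hc
      rw [hkey] at h0
      push_cast at h0
      linear_combination h0
    have hb0 : (b : ZMod ℓ) ≠ 0 := by
      intro h
      apply hA0
      rw [← hAb, h]
      ring
    have hsingle : (Finset.univ.filter
          (fun x : ZMod ℓ => (x - (b : ZMod ℓ))^2 = (A : ZMod ℓ) ∧ x ≠ 0))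
        = {2 * (b : ZMod ℓ)} := by
      ext x
      simp only [Finset.mem_filter, Finset.mem_univ, true_and, Finset.mem_singleton]
      constructor
      · rintro ⟨hsq, hx0⟩
        have hz : x * (x - 2 * (b : ZMod ℓ)) = 0 := by linear_combination hsq - hAb
        rcases mul_eq_zero.mp hz with h | h
        · exact absurd h hx0
        · exact sub_eq_zero.mp h
      · rintro rfl
        exact ⟨by linear_combination hAb, mul_ne_zero h20 hb0⟩
    rw [hzm, hsingle, Finset.card_singleton]

end
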